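/- arXiv:2501.12174 — 2 statements merged into one kernel-verified Lean document; each statement's English description precedes it below -/
import Mathlib

section
/- For a probability vector p in (0,1)^N and modulus m > 0, the spike entropy S(p,m) = Σ_k p_k/(1+m·p_k) satisfies 1/(1+m) ≤ S(p,m) ≤ N/(N+m), with the maximum attained at the uniform distribution. -/
/-- Spike entropy bounds: for a probability vector `p ∈ (0,1)^N` and modulus `m > 0`,
`1/(1+m) ≤ S(p,m) ≤ N/(N+m)`, with the maximum attained at the uniform distribution. -/
theorem spike_entropy_bounds (N : ℕ) (hN : 0 < N) (p : Fin N → ℝ) (m : ℝ) (hm : 0 < m)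
    (hp : ∀ k, 0 < p k ∧ p k < 1) (hsum : ∑ k, p k = 1) :
    1 / (1 + m) ≤ ∑ k, p k / (1 + m * p k) ∧
    (∑ k, p k / (1 + m * p k)) ≤ N / (N + m) ∧
    ((∀ k, p k = 1 / N) → ∑ k, p k / (1 + m * p k) = N / (N + m)) := by
  have hNR : (0 : ℝ) < N := by exact_mod_cast hN
  have hm1 : (0 : ℝ) < 1 + m := by linarith
  have hNm : (0 : ℝ) < N + m := by linarith
  have hden : ∀ k, (0 : ℝ) < 1 + m * p k := fun k => by
    have := (hp k).1; nlinarith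
  refine ⟨?_, ?_, ?_⟩
  · calc 1 / (1 + m) = ∑ k, p k / (1 + m) := by
          rw [← Finset.sum_div, hsum]
      _ ≤ ∑ k, p k / (1 + m * p k) := by
          apply Finset.sum_le_sum
          intro k _
          have h1 := (hp k).1
          have h2 := (hp k).2
          apply div_le_div_of_nonneg_left (le_of_lt h1) (hden k)
          nlinarith
  · have key : ∀ k, p k / (1 + m * p k) ≤
        1 / (N + m) + N ^ 2 / (N + m) ^ 2 * (p k - 1 / N) := by
      intro k
      have h1 := (hp k).1
      have hd := hden k
      rw [div_le_iff₀ hd]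
      have hsq : (0:ℝ) < (N + m) ^ 2 := by positivity
      field_simp
      nlinarith [mul_nonneg hm.le (sq_nonneg ((N:ℝ) * p k - 1)), mul_nonneg (mul_nonneg (mul_pos hNR hNm).le hm.le) (sq_nonneg ((N:ℝ) * p k - 1))]
    calc ∑ k, p k / (1 + m * p k)
        ≤ ∑ k, (1 / (N + m) + N ^ 2 / (N + m) ^ 2 * (p k - 1 / N)) :=
          Finset.sum_le_sum fun k _ => key k
      _ = N / (N + m) := by
          rw [Finset.sum_add_distrib, ← Finset.mul_sum, Finset.sum_sub_distrib, hsum]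
          simp only [Finset.sum_const, Finset.card_univ, Fintype.card_fin, nsmul_eq_mul]
          field_simp
          ring
  · intro h
    have : ∀ k ∈ Finset.univ, p k / (1 + m * p k) = 1 / (N + m) := by
      intro k _
      rw [h k]
      rw [div_eq_div_iff (by positivity) (ne_of_gt hNm)]
      field_simp
    rw [Finset.sum_congr rfl this]
    simp only [Finset.sum_const, Finset.card_univ, Fintype.card_fin, nsmul_eq_mul]
    field_simp
end

section
/- Suppose a probability vector p ∈ (0,1)^N is randomly partitioned into a green list G of size γN and a red list of size (1-γ)N, and the watermarked distribution boosts green-list probabilities by multiplying by α = exp(δ) and renormalizing. Then the probability that a token sampled from the watermarked distribution lies in G is at least (γα/(1+(α-1)γ)) · S(p, (1-γ)(α-1)/(1+(α-1)γ)), where S is spike entropy. -/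
open Finset

lemma card_filter_subset_powersetCard {β : Type*} [DecidableEq β] (s t : Finset β) (n : ℕ)
    (hts : t ⊆ s) (htn : t.card ≤ n) :
    ((s.powersetCard n).filter (fun G => t ⊆ G)).card = (s.card - t.card).choose (n - t.card) := by
  rw [← card_sdiff_of_subset hts, ← card_powersetCard (n - t.card) (s \ t)]
  refine card_bij' (fun G _ => G \ t) (fun G' _ => G' ∪ t) ?_ ?_ ?_ ?_
  · intro G hG
    simp only [mem_filter, mem_powersetCard] at hG
    obtain ⟨⟨hGs, hGc⟩, htG⟩ := hG
    refine mem_powersetCard.2 ⟨sdiff_subset_sdiff hGs le_rfl, ?_⟩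
    rw [card_sdiff_of_subset htG, hGc]
  · intro G' hG'
    simp only [mem_powersetCard] at hG'
    obtain ⟨hG's, hG'c⟩ := hG'
    have hdisj : Disjoint G' t := ((sdiff_disjoint).mono_left hG's)
    refine mem_filter.2 ⟨mem_powersetCard.2 ⟨union_subset (hG's.trans sdiff_subset) hts, ?_⟩,
      subset_union_right⟩
    rw [card_union_of_disjoint hdisj, hG'c]
    omega
  · intro G hG
    simp only [mem_filter, mem_powersetCard] at hG
    exact sdiff_union_of_subset hG.2
  · intro G' hG'
    simp only [mem_powersetCard] at hG'
    have hdisj : Disjoint G' t := ((sdiff_disjoint).mono_left hG'.1)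
    rw [union_sdiff_cancel_right hdisj]

set_option maxHeartbeats 1000000 in
/-- KGW lemma: for a probability vector `p ∈ (0,1)^N`, a uniformly random green list `G`
of size `γN`, and green logits boosted by `δ` (so `α = exp δ`), the probability of
sampling a green token is at least `(γα/(1+(α-1)γ)) · S(p, (1-γ)(α-1)/(1+(α-1)γ))`. -/
theorem kgw_green_probability_lower_bound (N : ℕ) (hN : 0 < N) (p : Fin N → ℝ)
    (hp : ∀ k, 0 < p k ∧ p k < 1) (hsum : ∑ k, p k = 1)
    (γ δ : ℝ) (hγ : 0 < γ) (hγ1 : γ < 1) (hδ : 0 < δ)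
    (g : ℕ) (hg : (g : ℝ) = γ * N) (α : ℝ) (hα : α = Real.exp δ) :
    (γ * α / (1 + (α - 1) * γ)) *
        (∑ k, p k / (1 + ((1 - γ) * (α - 1) / (1 + (α - 1) * γ)) * p k)) ≤
    (∑ G ∈ Finset.univ.powersetCard g,
        ∑ k ∈ G, α * p k / (1 + (α - 1) * ∑ j ∈ G, p j)) /
      ((Finset.univ : Finset (Fin N)).powersetCard g).card := by
  classical
  have hα1 : 1 < α := by
    rw [hα, show (1:ℝ) = Real.exp 0 from (Real.exp_zero).symm]
    exact Real.exp_lt_exp.mpr hδ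
  set c : ℝ := α - 1 with hc
  have hc0 : 0 < c := by simp only [hc]; linarith
  have hNR : (0:ℝ) < N := by exact_mod_cast hN
  have hg0 : 0 < g := by
    have : (0:ℝ) < g := by rw [hg]; positivity
    exact_mod_cast this
  have hgN : g < N := by
    have : (g:ℝ) < N := by rw [hg]; nlinarith
    exact_mod_cast this
  have hN2 : 2 ≤ N := by omega
  set S : Finset (Finset (Fin N)) := (Finset.univ : Finset (Fin N)).powersetCard g with hS
  set M : ℕ := (N-1).choose (g-1) with hM
  set K : ℕ := N.choose g with hK
  have hKcard : S.card = K := by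
    rw [hS, card_powersetCard, card_univ, Fintype.card_fin]
  have hM0 : 0 < M := Nat.choose_pos (by omega)
  have hK0 : 0 < K := Nat.choose_pos (by omega)
  have hMR : (0:ℝ) < M := by exact_mod_cast hM0
  have hKR : (0:ℝ) < K := by exact_mod_cast hK0
  have hNMK : N * M = K * g := by
    have h1 := Nat.add_one_mul_choose_eq (N-1) (g-1)
    have h2 : N - 1 + 1 = N := by omega
    have h3 : g - 1 + 1 = g := by omega
    rw [h2, h3] at h1
    rw [hM, hK, h1]
  have hγK : γ * K = M := by
    have hcast : (N:ℝ) * M = K * g := by exact_mod_cast hNMK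
    have hγval : γ = g / N := by
      field_simp at hg ⊢
      linarith
    rw [hγval, div_mul_eq_mul_div, div_eq_iff (ne_of_gt hNR)]
    linarith [hcast]
  have hQpos : ∀ G : Finset (Fin N), 0 < 1 + c * ∑ j ∈ G, p j := by
    intro G
    have : (0:ℝ) ≤ ∑ j ∈ G, p j := sum_nonneg fun j _ => (hp j).1.le
    nlinarith
  have hcγ : 0 < 1 + c * γ := by nlinarith
  have hcard1 : ∀ k : Fin N, (S.filter (fun G => k ∈ G)).card = M := by
    intro k
    have h := card_filter_subset_powersetCard (Finset.univ : Finset (Fin N)) {k} g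
      (subset_univ _) (by simp; omega)
    simp only [card_singleton, card_univ, Fintype.card_fin, singleton_subset_iff] at h
    rw [hS, h, hM]
  have hcard2 : ∀ j k : Fin N, j ≠ k →
      ((S.filter (fun G => k ∈ G ∧ j ∈ G)).card : ℝ) ≤ γ * M := by
    intro j k hjk
    have hset : (S.filter (fun G => k ∈ G ∧ j ∈ G)) =
        (S.filter (fun G => ({k, j} : Finset (Fin N)) ⊆ G)) := by
      refine filter_congr fun G _ => ?_
      simp [insert_subset_iff]
    rw [hset]
    rcases Nat.lt_or_ge g 2 with h2 | h2
    · have hempty : (S.filter (fun G => ({k, j} : Finset (Fin N)) ⊆ G)) = ∅ := by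
        refine filter_false_of_mem fun G hG => ?_
        rw [hS, mem_powersetCard] at hG
        intro hsub
        have hle : ({k, j} : Finset (Fin N)).card ≤ G.card := card_le_card hsub
        rw [card_pair (Ne.symm hjk), hG.2] at hle
        omega
      rw [hempty]
      simp only [card_empty, Nat.cast_zero]
      positivity
    · have hcardkj : ({k, j} : Finset (Fin N)).card = 2 := card_pair (Ne.symm hjk)
      have h := card_filter_subset_powersetCard (Finset.univ : Finset (Fin N)) {k, j} g
        (subset_univ _) (by omega)
      rw [hcardkj, card_univ, Fintype.card_fin] at h
      rw [hS, h]
      have hid : (N - 1) * (N-2).choose (g-2) = (N-1).choose (g-1) * (g - 1) := by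
        have h1 := Nat.add_one_mul_choose_eq (N-2) (g-2)
        have e1 : N - 2 + 1 = N - 1 := by omega
        have e2 : g - 2 + 1 = g - 1 := by omega
        rw [e1, e2] at h1
        exact h1
      have hidR : ((N:ℝ) - 1) * ((N-2).choose (g-2) : ℝ) = (M:ℝ) * ((g:ℝ) - 1) := by
        have hcast := congrArg (fun n : ℕ => (n:ℝ)) hid
        push_cast [Nat.cast_sub (by omega : 1 ≤ N), Nat.cast_sub (by omega : 1 ≤ g)] at hcast
        rw [hM]
        push_cast
        linarith [hcast]
      have hgγ : (g:ℝ) - 1 ≤ γ * ((N:ℝ) - 1) := by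
        rw [hg]; nlinarith
      have hN1 : (0:ℝ) < (N:ℝ) - 1 := by
        have : (2:ℝ) ≤ N := by exact_mod_cast hN2
        linarith
      have heq : ((N-2).choose (g-2) : ℝ) = (M:ℝ) * ((g:ℝ) - 1) / ((N:ℝ) - 1) := by
        rw [eq_div_iff (ne_of_gt hN1)]
        linarith [hidR]
      rw [heq, div_le_iff₀ hN1]
      nlinarith [hMR, hgγ]
  have hswap : ∀ (T : Finset (Finset (Fin N))) (f : Fin N → Finset (Fin N) → ℝ),
      ∑ G ∈ T, ∑ k ∈ G, f k G = ∑ k, ∑ G ∈ T.filter (fun G => k ∈ G), f k G := by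
    intro T f
    refine Finset.sum_comm' fun G k => ?_
    simp only [mem_filter, mem_univ, and_true]
  have hkey : ∀ k : Fin N, (M:ℝ) * (α * p k / (1 + c * γ + c * (1 - γ) * p k)) ≤
      ∑ G ∈ S.filter (fun G => k ∈ G), α * p k / (1 + c * ∑ j ∈ G, p j) := by
    intro k
    set T := S.filter (fun G => k ∈ G) with hT
    have hTcard : T.card = M := hcard1 k
    have hpk := hp k
    have hD : 0 < 1 + c * γ + c * (1 - γ) * p k := by nlinarith
    have hsumQ : ∑ G ∈ T, ∑ j ∈ G, p j ≤ (M:ℝ) * (γ + (1 - γ) * p k) := by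
      rw [hswap T (fun j _ => p j)]
      have herase : ∑ j ∈ univ.erase k, p j = 1 - p k := by
        have h := Finset.add_sum_erase univ p (mem_univ k)
        rw [hsum] at h
        linarith
      calc ∑ j, ∑ G ∈ T.filter (fun G => j ∈ G), p j
          = ∑ j, ((T.filter (fun G => j ∈ G)).card : ℝ) * p j := by
            refine sum_congr rfl fun j _ => ?_
            rw [sum_const, nsmul_eq_mul]
        _ ≤ (M:ℝ) * p k + ∑ j ∈ univ.erase k, γ * (M:ℝ) * p j := by
            rw [← Finset.add_sum_erase _ _ (mem_univ k)]
            have hfk : T.filter (fun G => k ∈ G) = T := by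
              refine filter_true_of_mem fun G hG => ?_
              rw [hT, mem_filter] at hG
              exact hG.2
            rw [hfk, hTcard]
            refine add_le_add le_rfl (sum_le_sum fun j hj => ?_)
            have hjk : j ≠ k := (mem_erase.1 hj).1
            have hfj : T.filter (fun G => j ∈ G) = S.filter (fun G => k ∈ G ∧ j ∈ G) := by
              rw [hT, filter_filter]
            rw [hfj]
            exact mul_le_mul_of_nonneg_right (hcard2 j k hjk) (hp j).1.le
        _ = (M:ℝ) * p k + γ * (M:ℝ) * (1 - p k) := by
            rw [← mul_sum, herase]
        _ = (M:ℝ) * (γ + (1 - γ) * p k) := by ring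
    have hTne : T.Nonempty := card_pos.mp (hTcard ▸ hM0)
    have hQsum_pos : 0 < ∑ G ∈ T, (1 + c * ∑ j ∈ G, p j) :=
      sum_pos (fun G _ => hQpos G) hTne
    have hAM : ((M:ℝ))^2 / (∑ G ∈ T, (1 + c * ∑ j ∈ G, p j)) ≤
        ∑ G ∈ T, 1 / (1 + c * ∑ j ∈ G, p j) := by
      have h := sq_sum_div_le_sum_sq_div T (fun _ => (1:ℝ)) (fun G _ => hQpos G)
      simpa [hTcard] using h
    have hdenom : ∑ G ∈ T, (1 + c * ∑ j ∈ G, p j) ≤ (M:ℝ) * (1 + c * (γ + (1 - γ) * p k)) := by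
      rw [sum_add_distrib, sum_const, hTcard, nsmul_eq_mul, mul_one, ← mul_sum]
      have h := mul_le_mul_of_nonneg_left hsumQ hc0.le
      nlinarith
    calc (M:ℝ) * (α * p k / (1 + c * γ + c * (1 - γ) * p k))
        = α * p k * ((M:ℝ)^2 / ((M:ℝ) * (1 + c * (γ + (1 - γ) * p k)))) := by
          have h1 : (1:ℝ) + c * (γ + (1 - γ) * p k) = 1 + c * γ + c * (1 - γ) * p k := by ring
          rw [h1]
          have hM' : (M:ℝ) ≠ 0 := ne_of_gt hMR
          have hD' : (1:ℝ) + c * γ + c * (1 - γ) * p k ≠ 0 := ne_of_gt hD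
          field_simp
      _ ≤ α * p k * ((M:ℝ)^2 / (∑ G ∈ T, (1 + c * ∑ j ∈ G, p j))) := by
          refine mul_le_mul_of_nonneg_left ?_ (mul_nonneg (by linarith) hpk.1.le)
          exact div_le_div_of_nonneg_left (sq_nonneg _) hQsum_pos hdenom
      _ ≤ α * p k * ∑ G ∈ T, 1 / (1 + c * ∑ j ∈ G, p j) :=
          mul_le_mul_of_nonneg_left hAM (mul_nonneg (by linarith) hpk.1.le)
      _ = ∑ G ∈ T, α * p k / (1 + c * ∑ j ∈ G, p j) := by
          rw [mul_sum]
          refine sum_congr rfl fun G _ => ?_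
          rw [mul_one_div]
  -- assemble
  rw [hKcard, le_div_iff₀ hKR]
  rw [hswap S (fun k G => α * p k / (1 + c * ∑ j ∈ G, p j))]
  have hLHS : (γ * α / (1 + c * γ)) *
      (∑ k, p k / (1 + ((1 - γ) * c / (1 + c * γ)) * p k)) * K
      = ∑ k, (M:ℝ) * (α * p k / (1 + c * γ + c * (1 - γ) * p k)) := by
    rw [mul_sum, sum_mul]
    refine sum_congr rfl fun k _ => ?_
    have hpk := hp k
    have hm : 0 < 1 + ((1 - γ) * c / (1 + c * γ)) * p k := by
      have h0 : 0 ≤ (1 - γ) * c / (1 + c * γ) :=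
        div_nonneg (mul_nonneg (by linarith) hc0.le) hcγ.le
      nlinarith [hpk.1]
    have hD : 0 < 1 + c * γ + c * (1 - γ) * p k := by nlinarith
    have hmden : 1 + (1 - γ) * c / (1 + c * γ) * p k
        = (1 + c * γ + c * (1 - γ) * p k) / (1 + c * γ) := by
      rw [eq_div_iff (ne_of_gt hcγ)]
      have hmc : (1 - γ) * c / (1 + c * γ) * (1 + c * γ) = (1 - γ) * c :=
        div_mul_cancel₀ _ (ne_of_gt hcγ)
      linear_combination p k * hmc
    rw [hmden, div_div_eq_mul_div, ← hγK]
    field_simp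
  rw [hLHS]
  exact sum_le_sum fun k _ => hkey k
end
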